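/- arXiv:1204.5159 — 2 statements merged into one kernel-verified Lean document; each statement's English description precedes it below -/
import Mathlib

section
/- The Resolve rule of LKDPLL(T) is size-preserving invertible: if Δ ⊢ φ, l∨C is derivable in LKDPLL(T) and Δ,l is T-inconsistent, then Δ ⊢ φ, C is derivable with a derivation of size no larger. -/
variable {L M : Type} [DecidableEq L]

/-- `Δ ⊨_T l`: every T-model of `Δ` satisfies the literal `l`. -/
def entails (sat : M → L → Prop) (Δ : Finset L) (l : L) : Prop :=
  ∀ m, (∀ x ∈ Δ, sat m x) → sat m l

/-- `Δ ⊨_T ⊥`: `Δ` is T-inconsistent (has no T-model). -/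
def incon (sat : M → L → Prop) (Δ : Finset L) : Prop :=
  ∀ m, ¬ ∀ x ∈ Δ, sat m x

/-- Literals appearing in `φ` or whose negation appears in `φ`. -/
def atm (neg : L → L) (φ : Finset (Finset L)) : Set L :=
  {l | ∃ C ∈ φ, l ∈ C ∨ neg l ∈ C}

/-- `|φ|`: the sum of the cardinalities of the clauses of `φ`. -/
def clsSize (φ : Finset (Finset L)) : ℕ := ∑ C ∈ φ, C.card

/-- The system LKDPLL(T): `Der neg sat Δ φ n` means `Δ ⊢ φ` has a derivation of size `n`. -/
inductive Der (neg : L → L) (sat : M → L → Prop) :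
    Finset L → Finset (Finset L) → ℕ → Prop where
  | empty (Δ : Finset L) (φ : Finset (Finset L)) :
      Der neg sat Δ (insert ∅ φ) 1
  | split {Δ : Finset L} {φ : Finset (Finset L)} {n m : ℕ} (l : L) :
      Der neg sat (insert (neg l) Δ) φ n → Der neg sat (insert l Δ) φ m →
      l ∈ atm neg φ → ¬ incon sat (insert (neg l) Δ) → ¬ incon sat (insert l Δ) →
      Der neg sat Δ φ (n + m + 1)
  | assert {Δ : Finset L} {φ : Finset (Finset L)} {n : ℕ} (l : L) :
      Der neg sat (insert l Δ) (insert {l} φ) n →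
      ¬ incon sat (insert (neg l) Δ) → ¬ incon sat (insert l Δ) →
      Der neg sat Δ (insert {l} φ) (n + 1)
  | subsume {Δ : Finset L} {φ : Finset (Finset L)} {n : ℕ} (l : L) (C : Finset L) :
      Der neg sat Δ φ n → incon sat (insert (neg l) Δ) →
      Der neg sat Δ (insert (insert l C) φ) (n + 1)
  | resolve {Δ : Finset L} {φ : Finset (Finset L)} {n : ℕ} (l : L) (C : Finset L) :
      Der neg sat Δ (insert C φ) n → incon sat (insert l Δ) →
      Der neg sat Δ (insert (insert l C) φ) (n + 1)


lemma incon_mono {sat : M → L → Prop} {Δ Δ' : Finset L} (h : incon sat Δ) (hs : Δ ⊆ Δ') :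
    incon sat Δ' := fun m hm => h m fun x hx => hm x (hs hx)

lemma der_weaken {neg : L → L} {sat : M → L → Prop} {Δ : Finset L} {φ : Finset (Finset L)}
    {n : ℕ} (h : Der neg sat Δ φ n) (D : Finset L) : Der neg sat Δ (insert D φ) n := by
  induction h with
  | empty Δ φ =>
    rw [Finset.insert_comm]
    exact Der.empty _ _
  | split a h1 h2 hatm hc1 hc2 ih1 ih2 =>
    refine Der.split a ih1 ih2 ?_ hc1 hc2
    obtain ⟨E, hE, hor⟩ := hatm
    exact ⟨E, Finset.mem_insert_of_mem hE, hor⟩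
  | assert a h1 hc1 hc2 ih =>
    rw [Finset.insert_comm]
    exact Der.assert a (by rw [Finset.insert_comm]; exact ih) hc1 hc2
  | subsume a C0 h1 hinc ih =>
    rw [Finset.insert_comm]
    exact Der.subsume a C0 ih hinc
  | resolve a C0 h1 hinc ih =>
    rw [Finset.insert_comm]
    exact Der.resolve a C0 (by rw [Finset.insert_comm]; exact ih) hinc

lemma erase_insert_self {s : Finset L} (a : L) : (insert a s).erase a = s.erase a :=
  Finset.erase_insert_eq_erase _ a

lemma resolve_inv_main (neg : L → L) (sat : M → L → Prop) (l : L) :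
    ∀ n Δ (ψ : Finset (Finset L)), Der neg sat Δ ψ n → incon sat (insert l Δ) →
    ∀ C : Finset L, insert l C ∈ ψ →
    ∃ m ≤ n, Der neg sat Δ (insert C (ψ.erase (insert l C))) m := by
  intro n
  induction n using Nat.strong_induction_on with
  | _ n IH =>
  intro Δ ψ h hl C hmem
  by_cases hlC : l ∈ C
  · rw [Finset.insert_eq_self.2 hlC] at hmem ⊢
    rw [Finset.insert_erase hmem]
    exact ⟨n, le_rfl, h⟩
  cases h with
  | empty Δ φ =>
    have h0 : (∅ : Finset L) ≠ insert l C := by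
      intro he; exact absurd (he ▸ Finset.mem_insert_self l C) (Finset.notMem_empty l)
    refine ⟨1, le_rfl, ?_⟩
    rw [Finset.erase_insert_of_ne h0, Finset.insert_comm]
    exact Der.empty _ _
  | split a h1 h2 hatm hc1 hc2 =>
    rename_i n₁ n₂
    have hal : a ≠ l := fun he => hc2 (by rw [he]; exact hl)
    have hnal : neg a ≠ l := fun he => hc1 (by rw [he]; exact hl)
    have hl1 : incon sat (insert l (insert (neg a) Δ)) :=
      incon_mono hl (Finset.insert_subset_insert l (Finset.subset_insert _ Δ))
    have hl2 : incon sat (insert l (insert a Δ)) :=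
      incon_mono hl (Finset.insert_subset_insert l (Finset.subset_insert _ Δ))
    obtain ⟨m₁, hm₁, Q₁⟩ := IH n₁ (by omega) _ _ h1 hl1 C hmem
    obtain ⟨m₂, hm₂, Q₂⟩ := IH n₂ (by omega) _ _ h2 hl2 C hmem
    have hatm' : a ∈ atm neg (insert C (ψ.erase (insert l C))) := by
      obtain ⟨E, hE, hor⟩ := hatm
      by_cases hE' : E = insert l C
      · subst hE'
        refine ⟨C, Finset.mem_insert_self _ _, ?_⟩
        rcases hor with h' | h'
        · rcases Finset.mem_insert.1 h' with h'' | h''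
          · exact absurd h'' hal
          · exact Or.inl h''
        · rcases Finset.mem_insert.1 h' with h'' | h''
          · exact absurd h'' hnal
          · exact Or.inr h''
      · exact ⟨E, Finset.mem_insert_of_mem (Finset.mem_erase.2 ⟨hE', hE⟩), hor⟩
    exact ⟨m₁ + m₂ + 1, by omega, Der.split a Q₁ Q₂ hatm' hc1 hc2⟩
  | assert a h1 hc1 hc2 =>
    rename_i φ n₁
    have hal : a ≠ l := fun he => hc2 (by rw [he]; exact hl)
    have hne2 : ({a} : Finset L) ≠ insert l C := by
      intro he
      have : l ∈ ({a} : Finset L) := he ▸ Finset.mem_insert_self l C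
      exact hal ((Finset.mem_singleton.1 this).symm)
    have hl1 : incon sat (insert l (insert a Δ)) :=
      incon_mono hl (Finset.insert_subset_insert l (Finset.subset_insert _ Δ))
    obtain ⟨m₁, hm₁, Q⟩ := IH n₁ (by omega) _ _ h1 hl1 C hmem
    rw [Finset.erase_insert_of_ne hne2, Finset.insert_comm] at Q
    refine ⟨m₁ + 1, by omega, ?_⟩
    rw [Finset.erase_insert_of_ne hne2, Finset.insert_comm]
    exact Der.assert a Q hc1 hc2
  | subsume a D h1 hinc =>
    rename_i φ n₁
    by_cases h1m : insert l C ∈ φ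
    · obtain ⟨m₁, hm₁, Q⟩ := IH n₁ (by omega) _ _ h1 hl C h1m
      by_cases hD : insert a D = insert l C
      · refine ⟨m₁, by omega, ?_⟩
        rw [hD, erase_insert_self]
        exact Q
      · refine ⟨m₁ + 1, by omega, ?_⟩
        rw [Finset.erase_insert_of_ne hD, Finset.insert_comm]
        exact Der.subsume a D Q hinc
    · have hD : insert a D = insert l C := by
        rcases Finset.mem_insert.1 hmem with h' | h'
        · exact h'.symm
        · exact absurd h' h1m
      refine ⟨n₁, by omega, ?_⟩
      rw [hD, erase_insert_self, Finset.erase_eq_of_notMem h1m]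
      exact der_weaken h1 C
  | resolve a D h1 hinc =>
    rename_i φ n₁
    by_cases hD : insert a D = insert l C
    · -- target: insert C (φ.erase (insert l C))
      have hCeq : C = (insert a D).erase l := by rw [hD, Finset.erase_insert hlC]
      by_cases hlD : l ∈ D
      · have hDm : insert l (D.erase l) ∈ insert D φ := by
          rw [Finset.insert_erase hlD]; exact Finset.mem_insert_self _ _
        obtain ⟨m₁, hm₁, Q⟩ := IH n₁ (by omega) _ _ h1 hl (D.erase l) hDm
        rw [Finset.insert_erase hlD, erase_insert_self] at Q
        -- Q : Der Δ (insert (D.erase l) (φ.erase D)) m₁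
        have hne3 : D.erase l ≠ insert l C := by
          intro he
          exact (Finset.notMem_erase l D) (he ▸ Finset.mem_insert_self l C)
        have step1 : ∃ k ≤ n₁,
            Der neg sat Δ (insert C (insert (D.erase l) ((φ.erase D).erase (insert l C)))) k := by
          by_cases hmem2 : insert l C ∈ φ.erase D
          · obtain ⟨k, hk, Q2⟩ := IH m₁ (by omega) _ _ Q hl C (Finset.mem_insert_of_mem hmem2)
            rw [Finset.erase_insert_of_ne hne3] at Q2
            exact ⟨k, le_trans hk hm₁, Q2⟩
          · rw [Finset.erase_eq_of_notMem hmem2]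
            exact ⟨m₁, hm₁, der_weaken Q C⟩
        obtain ⟨k, hk, W⟩ := step1
        have step2 : ∃ k' ≤ n₁ + 1,
            Der neg sat Δ (insert C ((φ.erase D).erase (insert l C))) k' := by
          by_cases hal : a = l
          · have hC : C = D.erase l := by
              rw [hCeq, hal, erase_insert_self]
            refine ⟨k, by omega, ?_⟩
            rw [hC] at W ⊢
            rw [Finset.insert_idem] at W
            exact W
          · have hC : C = insert a (D.erase l) := by
              rw [hCeq, Finset.erase_insert_of_ne hal]
            refine ⟨k + 1, by omega, ?_⟩
            rw [Finset.insert_comm] at W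
            have V := Der.resolve a (D.erase l) W hinc
            rw [← hC, Finset.insert_idem] at V
            exact V
        obtain ⟨k', hk', V⟩ := step2
        have hZ : (φ.erase D).erase (insert l C) = (φ.erase (insert l C)).erase D :=
          Finset.erase_right_comm
        refine ⟨k', by omega, ?_⟩
        rw [hD, erase_insert_self]
        by_cases hDφ : D ∈ φ.erase (insert l C)
        · have W2 := der_weaken V D
          rw [Finset.insert_comm, hZ, Finset.insert_erase hDφ] at W2
          exact W2
        · rw [hZ, Finset.erase_eq_of_notMem hDφ] at V
          exact V
      · have hal : a = l := by
          have hlm : l ∈ insert a D := hD ▸ Finset.mem_insert_self l C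
          rcases Finset.mem_insert.1 hlm with h' | h'
          · exact h'.symm
          · exact absurd h' hlD
        have hCD : C = D := by
          rw [hCeq, hal, Finset.erase_insert hlD]
        by_cases hmem2 : insert l C ∈ φ
        · obtain ⟨m₁, hm₁, Q⟩ := IH n₁ (by omega) _ _ h1 hl C (Finset.mem_insert_of_mem hmem2)
          have hDne : D ≠ insert l C := by
            intro he; exact hlD (he ▸ Finset.mem_insert_self l C)
          rw [Finset.erase_insert_of_ne hDne, ← hCD, Finset.insert_idem] at Q
          refine ⟨m₁, by omega, ?_⟩
          rw [hD, erase_insert_self]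
          exact Q
        · refine ⟨n₁, by omega, ?_⟩
          rw [hD, erase_insert_self, Finset.erase_eq_of_notMem hmem2, hCD]
          exact h1
    · have h1m : insert l C ∈ φ := by
        rcases Finset.mem_insert.1 hmem with h' | h'
        · exact absurd h'.symm hD
        · exact h'
      obtain ⟨m₁, hm₁, Q⟩ := IH n₁ (by omega) _ _ h1 hl C (Finset.mem_insert_of_mem h1m)
      by_cases hDC : D = insert l C
      · rw [hDC, erase_insert_self] at Q
        refine ⟨m₁, by omega, ?_⟩
        rw [Finset.erase_insert_of_ne hD, Finset.insert_comm]
        exact der_weaken Q (insert a D)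
      · rw [Finset.erase_insert_of_ne hDC, Finset.insert_comm] at Q
        refine ⟨m₁ + 1, by omega, ?_⟩
        rw [Finset.erase_insert_of_ne hD, Finset.insert_comm]
        exact Der.resolve a D Q hinc

/-- Size-preserving invertibility of the Resolve rule. -/
theorem resolve_invertible (neg : L → L) (sat : M → L → Prop)
    (Δ : Finset L) (φ : Finset (Finset L)) (l : L) (C : Finset L) (n : ℕ)
    (h : Der neg sat Δ (insert (insert l C) φ) n)
    (hl : incon sat (insert l Δ)) :
    ∃ m ≤ n, Der neg sat Δ (insert C φ) m := by
  obtain ⟨m, hm, Q⟩ := resolve_inv_main neg sat l n Δ _ h hl C (Finset.mem_insert_self _ _)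
  rw [erase_insert_self] at Q
  by_cases hφ : insert l C ∈ φ
  · have W := der_weaken Q (insert l C)
    rw [Finset.insert_comm, Finset.insert_erase hφ] at W
    exact ⟨m, hm, W⟩
  · rw [Finset.erase_eq_of_notMem hφ] at Q
    exact ⟨m, hm, Q⟩
end

section
/- Simulation of the Resolve rule of LKDPLL(T) in LK(T)p: if the LK(T)p sequent Γ = (Δ, φ', C') ⊢ [P] corresponds to the LKDPLL(T) sequent Δ ⊢ φ, l∨C (where C' P-corresponds to l∨C) and Δ,l is T-inconsistent, then the sequent (Δ, φ', C') ⊢ [P ∪ {¬l}] (obtained by one polarity-extension inference) corresponds to Δ ⊢ φ, C. -/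
variable {L M : Type} [DecidableEq L]

/-- Formulae of LK(T)p: literals and the four polarised connectives. -/
inductive Fm (L : Type) where
  | lit : L → Fm L
  | andP : Fm L → Fm L → Fm L
  | orP : Fm L → Fm L → Fm L
  | andN : Fm L → Fm L → Fm L
  | orN : Fm L → Fm L → Fm L

/-- Negation on LK(T)p formulae, extending the negation `neg` on literals. -/
def Fm.negF (neg : L → L) : Fm L → Fm L
  | .lit l => .lit (neg l)
  | .andP A B => .orN (A.negF neg) (B.negF neg)
  | .orP A B => .andN (A.negF neg) (B.negF neg)
  | .andN A B => .orP (A.negF neg) (B.negF neg)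
  | .orN A B => .andP (A.negF neg) (B.negF neg)

/-- `IsNegDisj C' ls`: `C'` is a negative disjunction (`∨⁻`-tree) of the literals `ls`. -/
inductive IsNegDisj : Fm L → List L → Prop where
  | lit (l : L) : IsNegDisj (.lit l) [l]
  | orN {A B : Fm L} {la lb : List L} :
      IsNegDisj A la → IsNegDisj B lb → IsNegDisj (.orN A B) (la ++ lb)

/-- `C'` P-corresponds to the clause `C`. -/
def PCorr (neg : L → L) (P : Set L) (C' : Fm L) (C : Finset L) : Prop :=
  ∃ ls : List L, IsNegDisj C' ls ∧ (∀ l ∈ C, l ∈ ls) ∧ ∀ l ∈ ls, l ∉ C → neg l ∈ P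

/-- The LK(T)p sequent `Δ, C'_1, …, C'_m ⊢ [P]` corresponds to the LKDPLL(T)
sequent `Δ ⊢ C_1, …, C_m`: each `C'_i` P-corresponds to `C_i` and `Δ ⊨_T l` for
every `l ∈ P`. -/
def SeqCorr (neg : L → L) (sat : M → L → Prop) (P : Set L)
    (Δ : Finset L) (φ' : List (Fm L)) (φ : List (Finset L)) : Prop :=
  List.Forall₂ (PCorr neg P) φ' φ ∧ ∀ l ∈ P, entails sat Δ l

/-- Simulation of Resolve in LK(T)p: if `Δ, φ', C' ⊢ [P]` corresponds to
`Δ ⊢ φ, l∨C` and `Δ, l` is T-inconsistent, then the sequent `Δ, φ', C' ⊢ [P ∪ {¬l}]`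
obtained by one polarity-extension inference corresponds to `Δ ⊢ φ, C`. -/
theorem resolve_simulation (neg : L → L) (sat : M → L → Prop)
    (hneg : ∀ (m : M) (l : L), sat m (neg l) ↔ ¬ sat m l)
    (P : Set L) (Δ : Finset L) (C' : Fm L) (φ' : List (Fm L))
    (l : L) (C : Finset L) (φs : List (Finset L))
    (h : SeqCorr neg sat P Δ (C' :: φ') (insert l C :: φs))
    (hl : incon sat (insert l Δ)) :
    SeqCorr neg sat (insert (neg l) P) Δ (C' :: φ') (C :: φs) := by
  obtain ⟨hf, hP⟩ := h
  have mono : ∀ C'' D, PCorr neg P C'' D → PCorr neg (insert (neg l) P) C'' D := by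
    rintro C'' D ⟨ls, h1, h2, h3⟩
    exact ⟨ls, h1, h2, fun x hx hxD => Set.mem_insert_iff.mpr (Or.inr (h3 x hx hxD))⟩
  rcases List.forall₂_cons.mp hf with ⟨hC, hφ⟩
  constructor
  · refine List.forall₂_cons.mpr ⟨?_, hφ.imp (fun {a b} h => mono a b h)⟩
    obtain ⟨ls, h1, h2, h3⟩ := hC
    refine ⟨ls, h1, fun x hx => h2 x (Finset.mem_insert_of_mem hx), ?_⟩
    intro x hx hxC
    by_cases hxl : x = l
    · subst hxl; exact Set.mem_insert _ _
    · exact Set.mem_insert_iff.mpr (Or.inr (h3 x hx (by simp [hxl, hxC])))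
  · intro x hx m hm
    rcases Set.mem_insert_iff.mp hx with rfl | hx
    · rw [hneg]
      intro hsl
      exact hl m (fun y hy => by rcases Finset.mem_insert.mp hy with rfl | hy
                                 exacts [hsl, hm y hy])
    · exact hP x hx m hm
end
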